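/- Let R be a join-semilattice, X and Y types, and ε, δ multi-valued selection functions on X and Y respectively. If ε and δ are both upwards closed, then the product ε ⊗ δ is an upwards closed multi-valued selection function on X × Y. -/

import Mathlib

universe u

/-- A multi-valued selection function on `X` with outcomes in `R`:
a map `(X → R) → Finset X` whose values are all nonempty. -/
structure Sel (R X : Type u) [SemilatticeSup R] : Type u where
  fn : (X → R) → Finset X
  ne : ∀ k, (fn k).Nonempty

variable {R : Type u} [SemilatticeSup R]

/-- A selection function is witnessing if whenever `x` is selected in the context
obtained by taking pointwise joins over an indexing function `I`, there is a choice
function `p` for `I` in whose induced context `x` is also selected. -/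
def Witnessing {X : Type u} (ε : Sel R X) : Prop :=
  ∀ (I : X → Finset (X → R)) (hI : ∀ x, (I x).Nonempty) (x : X),
    x ∈ ε.fn (fun x' => (I x').sup' (hI x') (fun P => P x')) →
      ∃ p : X → X → R, (∀ x', p x' ∈ I x') ∧ x ∈ ε.fn (fun x' => p x' x')

/-- A selection function is upwards closed if whenever `x` is selected in the context
induced by a choice function `p` for an indexing function `I`, then `x` is also selected
in the context obtained by taking pointwise joins over `I`. -/
def UpwardsClosed {X : Type u} (ε : Sel R X) : Prop :=
  ∀ (I : X → Finset (X → R)) (hI : ∀ x, (I x).Nonempty) (p : X → X → R),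
    (∀ x', p x' ∈ I x') → ∀ x, x ∈ ε.fn (fun x' => p x' x') →
      x ∈ ε.fn (fun x' => (I x').sup' (hI x') (fun P => P x'))

/-- The product of selection functions. -/
def Sel.prod {X Y : Type u} (ε : Sel R X) (δ : Sel R Y) : Sel R (X × Y) where
  fn q :=
    ((ε.fn (fun x => (δ.fn (fun y => q (x, y))).sup' (δ.ne _) (fun y => q (x, y)))).sigma
      (fun x => δ.fn (fun y => q (x, y)))).map
      ⟨fun p => (p.1, p.2), fun a b h => by
        cases a; cases b
        simp only [Prod.mk.injEq] at h
        obtain ⟨h1, h2⟩ := h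
        subst h1; subst h2; rfl⟩
  ne q := by
    obtain ⟨x, hx⟩ := ε.ne (fun x => (δ.fn (fun y => q (x, y))).sup' (δ.ne _) (fun y => q (x, y)))
    obtain ⟨y, hy⟩ := δ.ne (fun y => q (x, y))
    exact ⟨(x, y), Finset.mem_map.2 ⟨⟨x, y⟩, Finset.mem_sigma.mpr ⟨hx, hy⟩, rfl⟩⟩

/-- A strategy profile `(σ₁, σ₂)` is rational. -/
def IsRational {X Y : Type u} (ε : Sel R X) (δ : Sel R Y) (q : X × Y → R)
    (σ₁ : X) (σ₂ : X → Y) : Prop :=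
  (∃ yf : X → Y, (∀ x, yf x ∈ δ.fn (fun y' => q (x, y'))) ∧
      σ₁ ∈ ε.fn (fun x => q (x, yf x))) ∧
  ∀ x, σ₂ x ∈ δ.fn (fun y' => q (x, y'))

/-- The set of rational plays. -/
def RatPlays {X Y : Type u} (ε : Sel R X) (δ : Sel R Y) (q : X × Y → R) : Set (X × Y) :=
  {p | ∃ σ₁ σ₂, IsRational ε δ q σ₁ σ₂ ∧ p = (σ₁, σ₂ σ₁)}

/-- Subgame perfect strategy profile. -/
def SubgamePerfect {X Y : Type u} (ε : Sel R X) (δ : Sel R Y) (q : X × Y → R)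
    (σ₁ : X) (σ₂ : X → Y) : Prop :=
  σ₁ ∈ ε.fn (fun x => q (x, σ₂ x)) ∧ ∀ x, σ₂ x ∈ δ.fn (fun y => q (x, y))

/-- The set of subgame perfect plays. -/
def SPPlays {X Y : Type u} (ε : Sel R X) (δ : Sel R Y) (q : X × Y → R) : Set (X × Y) :=
  {p | ∃ σ₁ σ₂, SubgamePerfect ε δ q σ₁ σ₂ ∧ p = (σ₁, σ₂ σ₁)}

/-- If `ε` and `δ` are both upwards closed, so is their product `ε ⊗ δ`. -/
theorem upwardsClosed_prod {R X Y : Type u} [SemilatticeSup R]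
    (ε : Sel R X) (δ : Sel R Y)
    (hε : UpwardsClosed ε) (hδ : UpwardsClosed δ) :
    UpwardsClosed (ε.prod δ) := by
  classical
  intro I hI p hp z hz
  set q₀ : X × Y → R := fun z => p z z with hq₀def
  set Q : X × Y → R := fun z => (I z).sup' (hI z) (fun P => P z) with hQdef
  -- pointwise bound
  have hle : ∀ z, q₀ z ≤ Q z := fun z => Finset.le_sup' (fun P => P z) (hp z)
  -- inner sets inclusion via upwards closedness of δ
  have hsub : ∀ x' : X, ∀ y' ∈ δ.fn (fun y'' => q₀ (x', y'')),
      y' ∈ δ.fn (fun y'' => Q (x', y'')) := by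
    intro x' y' hy'
    have := hδ (fun y'' => (I (x', y'')).image (fun P => fun y3 => P (x', y3)))
      (fun y'' => (hI (x', y'')).image _)
      (fun y'' => fun y3 => p (x', y'') (x', y3))
      (fun y'' => Finset.mem_image_of_mem _ (hp (x', y''))) y' hy'
    convert this using 2
    funext y''
    rw [Finset.sup'_image]
    rfl
  -- k functions
  set kq : X → R := fun x' =>
    (δ.fn (fun y'' => q₀ (x', y''))).sup' (δ.ne _) (fun y' => q₀ (x', y')) with hkq
  set kQ : X → R := fun x' =>
    (δ.fn (fun y'' => Q (x', y''))).sup' (δ.ne _) (fun y' => Q (x', y')) with hkQ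
  have hkle : ∀ x', kq x' ≤ kQ x' := by
    intro x'
    apply Finset.sup'_le
    intro y' hy'
    exact le_trans (hle (x', y'))
      (Finset.le_sup' (fun y' => Q (x', y')) (hsub x' y' hy'))
  -- unpack hz
  obtain ⟨x, y⟩ := z
  simp only [Sel.prod, Finset.mem_map, Finset.mem_sigma, Function.Embedding.coeFn_mk] at hz ⊢
  obtain ⟨⟨x', y'⟩, ⟨hx, hy⟩, heq⟩ := hz
  obtain ⟨rfl, rfl⟩ : x' = x ∧ y' = y := by
    exact Prod.ext_iff.mp heq
  refine ⟨⟨x', y'⟩, ⟨?_, ?_⟩, rfl⟩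
  · -- first component via upwards closedness of ε
    have := hε (fun _ => insert (fun x'' => kq x'') {fun x'' => kQ x''})
      (fun _ => Finset.insert_nonempty _ _)
      (fun _ => fun x'' => kq x'')
      (fun _ => Finset.mem_insert_self _ _) x' hx
    convert this using 2
    funext x''
    rw [Finset.sup'_insert, Finset.sup'_singleton]
    show kQ x'' = kq x'' ⊔ kQ x''
    exact (sup_eq_right.mpr (hkle x'')).symm
    exact Finset.singleton_nonempty _
  · -- second component via upwards closedness of δ
    exact hsub x' y' hy
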